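/- Let {δ_n} be a bounded sequence of nonnegative reals, {p_n} a sequence of nonnegative reals, p_0 ≥ 0 arbitrary, and 0 ≤ L < 1. If p_n ≤ L^n · p_0 + Σ_{k=1}^{n-1} δ_k · L^{n-k} for all n ≥ 1, then limsup_n p_n ≤ (1/(1−L)) · limsup_n δ_n. -/

import Mathlib

open Filter Finset

theorem stmt_0 (δ p : ℕ → ℝ) (L : ℝ)
    (hδ0 : ∀ n, 0 ≤ δ n) (hδb : ∃ M, ∀ n, δ n ≤ M)
    (hp0 : ∀ n, 0 ≤ p n)
    (hL0 : 0 ≤ L) (hL1 : L < 1)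
    (h : ∀ n ≥ 1, p n ≤ L ^ n * p 0 + ∑ k ∈ Finset.Ico 1 n, δ k * L ^ (n - k)) :
    Filter.limsup p Filter.atTop ≤ (1 / (1 - L)) * Filter.limsup δ Filter.atTop := by
  obtain ⟨M, hM⟩ := hδb
  have hM0 : 0 ≤ M := le_trans (hδ0 0) (hM 0)
  have h1L : 0 < 1 - L := by linarith
  set d := Filter.limsup δ Filter.atTop with hdd
  have hδbdd : Filter.IsBoundedUnder (· ≤ ·) Filter.atTop δ :=
    Filter.isBoundedUnder_of ⟨M, hM⟩
  have hd0 : 0 ≤ d :=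
    Filter.le_limsup_of_frequently_le (Filter.Frequently.of_forall hδ0) hδbdd
  have hpcob : Filter.IsCoboundedUnder (· ≤ ·) Filter.atTop p :=
    Filter.isCoboundedUnder_le_of_le Filter.atTop hp0
  have hgeom : ∀ n : ℕ, ∑ j ∈ Finset.range n, L ^ j ≤ 1 / (1 - L) := by
    intro n
    have hpow : 0 ≤ L ^ n := pow_nonneg hL0 n
    rw [geom_sum_eq (ne_of_lt hL1)]
    have heq : (L ^ n - 1) / (L - 1) = (1 - L ^ n) / (1 - L) := by
      rw [← neg_div_neg_eq]; ring_nf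
    rw [heq, div_le_div_iff₀ h1L h1L]
    nlinarith
  have key : ∀ ε > (0:ℝ), Filter.limsup p Filter.atTop ≤ d / (1 - L) + ε := by
    intro ε hε
    set ε1 := ε * (1 - L) / 2 with hε1def
    have hε1 : 0 < ε1 := by positivity
    obtain ⟨N0, hN0⟩ := Filter.eventually_atTop.mp
      (Filter.eventually_lt_of_limsup_lt (by linarith : d < d + ε1) hδbdd)
    set N := max N0 1 with hNdef
    have hN1 : 1 ≤ N := le_max_right _ _
    have hNδ : ∀ k ≥ N, δ k ≤ d + ε1 := fun k hk =>
      (hN0 k (le_trans (le_max_left _ _) hk)).le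
    -- sum over Ico N n bounded
    have hsum2 : ∀ n, N ≤ n → ∑ k ∈ Finset.Ico N n, δ k * L ^ (n - k)
        ≤ (d + ε1) * (1 / (1 - L)) := by
      intro n hn
      calc ∑ k ∈ Finset.Ico N n, δ k * L ^ (n - k)
          ≤ ∑ k ∈ Finset.Ico N n, (d + ε1) * L ^ (n - k) := by
            apply Finset.sum_le_sum
            intro k hk
            exact mul_le_mul_of_nonneg_right (hNδ k (Finset.mem_Ico.mp hk).1)
              (pow_nonneg hL0 _)
        _ = (d + ε1) * ∑ k ∈ Finset.Ico N n, L ^ (n - k) := by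
            rw [Finset.mul_sum]
        _ ≤ (d + ε1) * (1 / (1 - L)) := by
            apply mul_le_mul_of_nonneg_left _ (by linarith)
            calc ∑ k ∈ Finset.Ico N n, L ^ (n - k)
                = ∑ j ∈ (Finset.Ico N n).image (n - ·), L ^ j := by
                  rw [Finset.sum_image]
                  intro a ha b hb hab
                  have ha' := (Finset.mem_Ico.mp ha).2
                  have hb' := (Finset.mem_Ico.mp hb).2
                  beta_reduce at hab
                  omega
              _ ≤ ∑ j ∈ Finset.range n, L ^ j := by
                  apply Finset.sum_le_sum_of_subset_of_nonneg
                  · intro j hj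
                    obtain ⟨a, ha, rfl⟩ := Finset.mem_image.mp hj
                    have := (Finset.mem_Ico.mp ha)
                    simp only [Finset.mem_range]
                    omega
                  · intro j _ _
                    exact pow_nonneg hL0 _
              _ ≤ 1 / (1 - L) := hgeom n
    have hsum1 : ∀ n, N ≤ n → ∑ k ∈ Finset.Ico 1 N, δ k * L ^ (n - k)
        ≤ (N : ℝ) * M * L ^ (n - N) := by
      intro n hn
      calc ∑ k ∈ Finset.Ico 1 N, δ k * L ^ (n - k)
          ≤ ∑ k ∈ Finset.Ico 1 N, M * L ^ (n - N) := by
            apply Finset.sum_le_sum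
            intro k hk
            obtain ⟨hk1, hk2⟩ := Finset.mem_Ico.mp hk
            exact mul_le_mul (hM k) (pow_le_pow_of_le_one hL0 hL1.le (by omega))
              (pow_nonneg hL0 _) hM0
        _ = ((N - 1 : ℕ) : ℝ) * (M * L ^ (n - N)) := by
            rw [Finset.sum_const, Nat.card_Ico, nsmul_eq_mul]
        _ ≤ (N : ℝ) * M * L ^ (n - N) := by
            rw [mul_assoc]
            apply mul_le_mul_of_nonneg_right _ (by positivity)
            exact_mod_cast Nat.cast_le.mpr (Nat.sub_le N 1)
    -- the vanishing part
    have hg : Filter.Tendsto (fun n => L ^ n * p 0 + (N : ℝ) * M * L ^ (n - N))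
        Filter.atTop (nhds 0) := by
      have h1 : Filter.Tendsto (fun n : ℕ => L ^ n * p 0) Filter.atTop (nhds 0) := by
        simpa using (tendsto_pow_atTop_nhds_zero_of_lt_one hL0 hL1).mul_const (p 0)
      have h2 : Filter.Tendsto (fun n : ℕ => (N : ℝ) * M * L ^ (n - N))
          Filter.atTop (nhds 0) := by
        have := ((tendsto_pow_atTop_nhds_zero_of_lt_one hL0 hL1).comp
          (Filter.tendsto_sub_atTop_nat N)).const_mul ((N : ℝ) * M)
        simpa using this
      simpa using h1.add h2
    obtain ⟨N2, hN2⟩ := Filter.eventually_atTop.mp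
      (hg.eventually (gt_mem_nhds (by positivity : (0:ℝ) < ε / 2)))
    apply Filter.limsup_le_of_le hpcob
    rw [Filter.eventually_atTop]
    refine ⟨max (N + 1) N2, fun n hn => ?_⟩
    have hnN : N ≤ n := by
      have := le_trans (le_max_left (N+1) N2) hn; omega
    have hn1 : 1 ≤ n := le_trans hN1 hnN
    have hsplit : ∑ k ∈ Finset.Ico 1 n, δ k * L ^ (n - k)
        = ∑ k ∈ Finset.Ico 1 N, δ k * L ^ (n - k)
          + ∑ k ∈ Finset.Ico N n, δ k * L ^ (n - k) :=
      (Finset.sum_Ico_consecutive _ hN1 hnN).symm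
    have hb1 := hsum1 n hnN
    have hb2 := hsum2 n hnN
    have hb3 : L ^ n * p 0 + (N : ℝ) * M * L ^ (n - N) < ε / 2 :=
      hN2 n (le_trans (le_max_right _ _) hn)
    have hε1calc : (d + ε1) * (1 / (1 - L)) = d / (1 - L) + ε / 2 := by
      have : ε1 / (1 - L) = ε / 2 := by
        rw [hε1def]
        field_simp
      rw [mul_one_div, add_div, this]
    have := h n hn1
    rw [hsplit] at this
    calc p n ≤ L ^ n * p 0 + (∑ k ∈ Finset.Ico 1 N, δ k * L ^ (n - k)
          + ∑ k ∈ Finset.Ico N n, δ k * L ^ (n - k)) := this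
      _ ≤ L ^ n * p 0 + ((N : ℝ) * M * L ^ (n - N) + (d + ε1) * (1 / (1 - L))) := by
          linarith
      _ ≤ ε / 2 + (d / (1 - L) + ε / 2) := by rw [hε1calc]; linarith
      _ = d / (1 - L) + ε := by ring
  have hfin : Filter.limsup p Filter.atTop ≤ d / (1 - L) :=
    le_of_forall_pos_le_add key
  rw [div_eq_mul_one_div, mul_comm] at hfin
  exact hfin
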